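/- Let 𝕜 = (k_n) ∈ Δ. For any r ∈ ℕ and any ℓ₁, …, ℓ_r ∈ ℤ, the characteristic function of μ_𝕜 is multiplicative on block-diagonal arguments: μ̂_𝕜(diag(ϖ^{-ℓ₁}J, …, ϖ^{-ℓ_r}J, 0, 0, …)) = ∏_{i=1}^r μ̂_𝕜(diag(ϖ^{-ℓ_i}J, 0, 0, …)). -/

import Mathlib

/-!
Common setup: `F` is a non-discrete non-Archimedean locally compact field, encoded as a
nontrivially normed field which is ultrametric and locally compact.  Its ring of integers is
`O_F = {x : F | ‖x‖ ≤ 1}`.  The condition `char F ≠ 2` is encoded as `(2 : F) ≠ 0`.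
-/

open MeasureTheory Metric Matrix
open scoped symmDiff ENNReal

noncomputable section
set_option linter.unusedSectionVars false

namespace SkewPaper

variable (F : Type) [NontriviallyNormedField F] [IsUltrametricDist F]
  [LocallyCompactSpace F] [SecondCountableTopology F] [MeasurableSpace F] [BorelSpace F]

/-- The infinite identity matrix. -/
def idM : ℕ → ℕ → F := fun i j => if i = j then 1 else 0

/-- Product of infinite matrices, defined via `tsum` (a finite sum whenever the supports
involved are finite, e.g. for matrices that are eventually the identity). -/
def mulInf (g h : ℕ → ℕ → F) : ℕ → ℕ → F := fun i j => ∑' k, g i k * h k j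

/-- All entries of `g` lie in the ring of integers `O_F = {x | ‖x‖ ≤ 1}`. -/
def IsIntegralM (g : ℕ → ℕ → F) : Prop := ∀ i j, ‖g i j‖ ≤ 1

/-- `g` coincides with the identity matrix outside a finite upper-left corner. -/
def EventuallyId (g : ℕ → ℕ → F) : Prop :=
  ∃ N, ∀ i j, N ≤ i ∨ N ≤ j → g i j = idM F i j

/-- The group `GL(∞, O_F)`: infinite matrices over `O_F`, eventually equal to the identity,
invertible with an inverse of the same kind. -/
def GLinf : Set (ℕ → ℕ → F) :=
  {g | IsIntegralM F g ∧ EventuallyId F g ∧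
    ∃ h, IsIntegralM F h ∧ EventuallyId F h ∧ mulInf F g h = idM F ∧ mulInf F h g = idM F}

/-- `A` is skew-symmetric: `A j i = - A i j` for all `i, j`. -/
def IsSkew (A : ℕ → ℕ → F) : Prop := ∀ i j, A j i = - A i j

/-- The space `Skew(ℕ, F)` of infinite skew-symmetric matrices over `F`. -/
def SkewSet : Set (ℕ → ℕ → F) := {A | IsSkew F A}

/-- `Skew(ℕ, F)` as a topological/measurable space. -/
abbrev SkewM := ↥(SkewSet F)

/-- `A` is symmetric. -/
def IsSym (A : ℕ → ℕ → F) : Prop := ∀ i j, A j i = A i j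

/-- The space `Sym(ℕ, F)` of infinite symmetric matrices over `F`. -/
def SymSet : Set (ℕ → ℕ → F) := {A | IsSym F A}

/-- `Sym(ℕ, F)` as a topological/measurable space. -/
abbrev SymM := ↥(SymSet F)

/-- The action `A ↦ g A gᵗ` of `GL(∞, O_F)` on `Skew(ℕ, F)`:
`(g A gᵗ)_{ij} = ∑_{k,l} g_{ik} g_{jl} A_{kl}`. -/
def skewAct (g : ℕ → ℕ → F) (A : SkewM F) : SkewM F :=
  ⟨fun i j => ∑' p : ℕ × ℕ, g i p.1 * g j p.2 * A.1 p.1 p.2, by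
    intro i j
    have h1 : (∑' p : ℕ × ℕ, g j p.1 * g i p.2 * A.1 p.1 p.2)
        = ∑' p : ℕ × ℕ, g j p.2 * g i p.1 * A.1 p.2 p.1 :=
      ((Equiv.prodComm ℕ ℕ).tsum_eq (fun p : ℕ × ℕ => g j p.1 * g i p.2 * A.1 p.1 p.2)).symm
    have h2 : (∑' p : ℕ × ℕ, g j p.2 * g i p.1 * A.1 p.2 p.1)
        = ∑' p : ℕ × ℕ, - (g i p.1 * g j p.2 * A.1 p.1 p.2) := by
      refine tsum_congr fun p => ?_
      rw [A.2 p.1 p.2]; ring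
    simp only [h1, h2, tsum_neg]⟩

/-- The action `A ↦ g A gᵗ` of `GL(∞, O_F)` on `Sym(ℕ, F)`. -/
def symAct (g : ℕ → ℕ → F) (A : SymM F) : SymM F :=
  ⟨fun i j => ∑' p : ℕ × ℕ, g i p.1 * g j p.2 * A.1 p.1 p.2, by
    intro i j
    have h1 : (∑' p : ℕ × ℕ, g j p.1 * g i p.2 * A.1 p.1 p.2)
        = ∑' p : ℕ × ℕ, g j p.2 * g i p.1 * A.1 p.2 p.1 :=
      ((Equiv.prodComm ℕ ℕ).tsum_eq (fun p : ℕ × ℕ => g j p.1 * g i p.2 * A.1 p.1 p.2)).symm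
    have h2 : (∑' p : ℕ × ℕ, g j p.2 * g i p.1 * A.1 p.2 p.1)
        = ∑' p : ℕ × ℕ, g i p.1 * g j p.2 * A.1 p.1 p.2 := by
      refine tsum_congr fun p => ?_
      rw [A.2 p.1 p.2]; ring
    simp only [h1, h2]⟩

/-- A Borel probability measure on `Skew(ℕ, F)` is `GL(∞, O_F)`-invariant. -/
def IsInvSkew (μ : Measure (SkewM F)) : Prop :=
  ∀ g ∈ GLinf F, μ.map (skewAct F g) = μ

/-- A Borel measure on `Skew(ℕ, F)` is ergodic for the `GL(∞, O_F)`-action: any Borel set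
`E` with `μ(E ∆ gE) = 0` for all `g` has measure `0` or `1`. -/
def IsErgSkew (μ : Measure (SkewM F)) : Prop :=
  ∀ E : Set (SkewM F), MeasurableSet E →
    (∀ g ∈ GLinf F, μ (E ∆ (skewAct F g ⁻¹' E)) = 0) → μ E = 0 ∨ μ E = 1

/-- A Borel probability measure on `Mat(ℕ, F)` is `GL(∞, O_F) × GL(∞, O_F)`-invariant
(for the action `(g₁, g₂) · X = g₁ X g₂⁻¹`; equivalently, `X ↦ g₁ X g₂` preserves `σ` for
all `g₁, g₂ ∈ GL(∞, O_F)`). -/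
def IsInvMat (σ : Measure (ℕ → ℕ → F)) : Prop :=
  ∀ g₁ ∈ GLinf F, ∀ g₂ ∈ GLinf F,
    σ.map (fun X => mulInf F (mulInf F g₁ X) g₂) = σ

/-- A Borel probability measure on `Sym(ℕ, F)` is `GL(∞, O_F)`-invariant. -/
def IsInvSym (μ : Measure (SymM F)) : Prop :=
  ∀ g ∈ GLinf F, μ.map (symAct F g) = μ

/-- The map `τ(X) = X - Xᵗ` from `Mat(ℕ, F)` to `Skew(ℕ, F)`. -/
def tauMap (X : ℕ → ℕ → F) : SkewM F :=
  ⟨fun i j => X i j - X j i, by intro i j; ring⟩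

/-- The map `X ↦ X + Xᵗ` from `Mat(ℕ, F)` to `Sym(ℕ, F)`. -/
def sigmaMap (X : ℕ → ℕ → F) : SymM F :=
  ⟨fun i j => X i j + X j i, by intro i j; ring⟩

/-! ### The parameter space `Δ` and the measures `μ_𝕜` -/

/-- Topologize `ℤ ∪ {-∞}` by its order topology: integer points are isolated and the
intervals `[-∞, a)` form a neighbourhood basis of `-∞`. -/
instance : TopologicalSpace (WithBot ℤ) := Preorder.topology _
instance : OrderTopology (WithBot ℤ) := ⟨rfl⟩

/-- The space `Δ` of nonincreasing sequences `(k_j)` with `k_j ∈ ℤ ∪ {-∞}`, topologized as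
a subspace of the product `(ℤ ∪ {-∞})^ℕ`. -/
abbrev DeltaSet := {k : ℕ → WithBot ℤ // Antitone k}

/-- `ppow ϖ m = ϖ^(-m)`, with the convention `ϖ^(-(-∞)) = ϖ^∞ = 0`. -/
def ppow (ϖ : F) : WithBot ℤ → F := fun m => WithBot.recBotCoe 0 (fun z : ℤ => ϖ ^ (-z)) m

/-- The limit `k = lim_n k_n` of a nonincreasing sequence in `ℤ ∪ {-∞}` (its infimum). -/
def klim (k : ℕ → WithBot ℤ) : WithBot ℤ := ⨅ n, k n

/-- The sample space carrying the independent uniform random variables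
`X_i^{(n)} = ω (0, n, i)`, `Y_i^{(n)} = ω (1, n, i)` and `Z_{ij} = ω (2, i, j)`. -/
abbrev SampleSpace := (Fin 3 × ℕ × ℕ) → F

/-- The random infinite skew-symmetric matrix
`A_𝕜 = ∑_{n : k_n > k} ϖ^{-k_n} [X_i^{(n)} Y_j^{(n)} - X_j^{(n)} Y_i^{(n)}]_{i,j} + ϖ^{-k} Z`
of Definition 1.1. -/
def Amat (ϖ : F) (k : ℕ → WithBot ℤ) (ω : SampleSpace F) : ℕ → ℕ → F := fun i j =>
  (∑' n : ℕ, if klim k < k n then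
      ppow F ϖ (k n) * (ω (0, n, i) * ω (1, n, j) - ω (0, n, j) * ω (1, n, i)) else 0)
  + ppow F ϖ (klim k) *
      (if i < j then ω (2, i, j) else if j < i then - ω (2, j, i) else 0)

lemma Amat_isSkew (ϖ : F) (k : ℕ → WithBot ℤ) (ω : SampleSpace F) :
    Amat F ϖ k ω ∈ SkewSet F := by
  intro i j
  unfold Amat
  have h1 : (∑' n : ℕ, if klim k < k n then
      ppow F ϖ (k n) * (ω (0, n, j) * ω (1, n, i) - ω (0, n, i) * ω (1, n, j)) else 0)
      = ∑' n : ℕ, - (if klim k < k n then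
      ppow F ϖ (k n) * (ω (0, n, i) * ω (1, n, j) - ω (0, n, j) * ω (1, n, i)) else 0) := by
    refine tsum_congr fun n => ?_
    split <;> ring
  have h2 : (if j < i then ω (2, j, i) else if i < j then - ω (2, i, j) else 0)
      = - (if i < j then ω (2, i, j) else if j < i then - ω (2, j, i) else 0) := by
    rcases lt_trichotomy i j with h | h | h
    · simp [h, not_lt_of_gt h]
    · simp [h, lt_irrefl]
    · simp [h, not_lt_of_gt h]
  rw [h1, h2, tsum_neg]
  ring

/-- The random matrix `A_𝕜`, as a `Skew(ℕ, F)`-valued random variable. -/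
def AmatS (ϖ : F) (𝕜 : DeltaSet) (ω : SampleSpace F) : SkewM F :=
  ⟨Amat F ϖ 𝕜.1 ω, Amat_isSkew F ϖ 𝕜.1 ω⟩

/-- The measure `μ_𝕜`: the law of the random skew-symmetric matrix `A_𝕜`. -/
def muK (ϖ : F) (P : Measure (SampleSpace F)) (𝕜 : DeltaSet) : Measure (SkewM F) :=
  P.map (AmatS F ϖ 𝕜)

/-- `ν` is the uniform (normalized Haar) probability measure on the ring of integers
`O_F`: a probability measure carried by `O_F` and invariant under all translations by
elements of `O_F`. -/
def IsUnifO (ν : Measure F) : Prop :=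
  IsProbabilityMeasure ν ∧ ν {x : F | ¬ ‖x‖ ≤ 1} = 0 ∧
    ∀ a : F, ‖a‖ ≤ 1 → ν.map (fun x => a + x) = ν

/-- `P` is the joint law of countably many independent random variables, each sampled
uniformly from `O_F`. -/
def IsIIDUnifO (P : Measure (SampleSpace F)) : Prop :=
  IsProbabilityMeasure P ∧
  ProbabilityTheory.iIndepFun
    (fun idx => fun ω : SampleSpace F => ω idx) P ∧
  ∀ idx : Fin 3 × ℕ × ℕ, IsUnifO F (P.map (fun ω : SampleSpace F => ω idx))

/-- `ϖ` is a uniformizer of `F`: a generator of the maximal ideal `m = {x | ‖x‖ < 1}`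
of `O_F`. -/
def IsUniformizer (ϖ : F) : Prop :=
  ϖ ≠ 0 ∧ ‖ϖ‖ < 1 ∧ ∀ x : F, ‖x‖ < 1 → ∃ y : F, ‖y‖ ≤ 1 ∧ x = ϖ * y

/-- The residue field `O_F/m` has `q` elements; for the normalized absolute value this is
recorded by `‖ϖ‖ = q⁻¹`, together with the fact that the value group is `q^ℤ`. -/
def IsResidueCard (ϖ : F) (q : ℕ) : Prop :=
  1 < q ∧ ‖ϖ‖ = (q : ℝ)⁻¹ ∧ ∀ x : F, x ≠ 0 → ∃ m : ℤ, ‖x‖ = (q : ℝ) ^ m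

/-! ### Characteristic functions -/

/-- `tr(X · S)` for infinite matrices, via `tsum` (a finite sum when `X` has finitely many
nonzero entries). -/
def trPair (X S : ℕ → ℕ → F) : F := ∑' p : ℕ × ℕ, X p.1 p.2 * S p.2 p.1

/-- The characteristic function `μ̂(X) = ∫ χ(tr(X S)) dμ(S)` of a measure on `Skew(ℕ, F)`. -/
def charFunSkew (χ : AddChar F ℂ) (μ : Measure (SkewM F)) (X : ℕ → ℕ → F) : ℂ :=
  ∫ S, χ (trPair F X S.1) ∂μ

/-- The characteristic function `σ̂(X) = ∫ χ(tr(X M)) dσ(M)` of a measure on `Mat(ℕ, F)`. -/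
def charFunMat (χ : AddChar F ℂ) (σ : Measure (ℕ → ℕ → F)) (X : ℕ → ℕ → F) : ℂ :=
  ∫ M, χ (trPair F X M) ∂σ

/-- `χ` is a (continuous) additive character of `F` with `χ ≡ 1` on `O_F` and `χ`
nonconstant on `ϖ⁻¹ O_F`. -/
def IsGoodChar (ϖ : F) (χ : AddChar F ℂ) : Prop :=
  Continuous χ ∧ (∀ x : F, ‖x‖ ≤ 1 → χ x = 1) ∧ ∃ x : F, ‖ϖ * x‖ ≤ 1 ∧ χ x ≠ 1

/-! ### Finite matrices, Haar measures, orbital measures -/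

instance (m n : ℕ) : MeasurableSpace (Matrix (Fin m) (Fin n) F) :=
  inferInstanceAs (MeasurableSpace (Fin m → Fin n → F))

instance (m n : ℕ) : TopologicalSpace (Matrix (Fin m) (Fin n) F) :=
  inferInstanceAs (TopologicalSpace (Fin m → Fin n → F))

/-- The compact group `GL(n, O_F)` of `n × n` matrices over `O_F` whose inverse also has
entries in `O_F`. -/
def GLO (n : ℕ) : Set (Matrix (Fin n) (Fin n) F) :=
  {g | (∀ i j, ‖g i j‖ ≤ 1) ∧ ∃ h : Matrix (Fin n) (Fin n) F,
    (∀ i j, ‖h i j‖ ≤ 1) ∧ g * h = 1 ∧ h * g = 1}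

/-- `η` is the normalized Haar measure of the compact group `GL(n, O_F)`, viewed as a
measure on `n × n` matrices over `F`: a probability measure carried by `GL(n, O_F)`,
invariant under left and right translations by elements of `GL(n, O_F)`. -/
def IsHaarGL (n : ℕ) (η : Measure (Matrix (Fin n) (Fin n) F)) : Prop :=
  IsProbabilityMeasure η ∧ η (GLO F n)ᶜ = 0 ∧
    ∀ g ∈ GLO F n, η.map (fun x => g * x) = η ∧ η.map (fun x => x * g) = η

/-- `m` is the normalized Haar measure of the compact additive group `Mat(n, O_F)`, viewed
as a measure on `n × n` matrices over `F`. -/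
def IsHaarMat (n : ℕ) (m : Measure (Matrix (Fin n) (Fin n) F)) : Prop :=
  IsProbabilityMeasure m ∧ m {Y | ¬ ∀ i j, ‖Y i j‖ ≤ 1} = 0 ∧
    ∀ B : Matrix (Fin n) (Fin n) F, (∀ i j, ‖B i j‖ ≤ 1) → m.map (fun Y => B + Y) = m

/-- The matrix `J = [[0, 1], [-1, 0]]`. -/
def Jmat : Matrix (Fin 2) (Fin 2) F := !![0, 1; -1, 0]

/-- The function `Θ(x) = ∫_{Mat(2, O_F)} χ(x · tr(Y J Yᵗ J)) dY`, where `dY` is the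
normalized Haar measure `m2` of `Mat(2, O_F)`. -/
def Theta (χ : AddChar F ℂ) (m2 : Measure (Matrix (Fin 2) (Fin 2) F)) (x : F) : ℂ :=
  ∫ Y, χ (x * Matrix.trace (Y * Jmat F * Yᵀ * Jmat F)) ∂m2

/-- The block-diagonal skew-symmetric matrix `diag(x₁ J, …, xₙ J)` of size `2n × 2n`. -/
def bdiagJ (n : ℕ) (xs : Fin n → F) : Matrix (Fin (2 * n)) (Fin (2 * n)) F :=
  Matrix.of fun i j : Fin (2 * n) =>
    if (j : ℕ) = (i : ℕ) + 1 ∧ (i : ℕ) % 2 = 0 then xs ⟨(i : ℕ) / 2, by have := i.isLt; omega⟩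
    else if (i : ℕ) = (j : ℕ) + 1 ∧ (j : ℕ) % 2 = 0 then
      - xs ⟨(j : ℕ) / 2, by have := j.isLt; omega⟩
    else 0

/-- The infinite matrix `diag(x₀ J, …, x_{r-1} J, 0, 0, …)`. -/
def bdiagJInf (r : ℕ) (xs : ℕ → F) : ℕ → ℕ → F := fun i j =>
  if i < 2 * r ∧ j < 2 * r then
    (if j = i + 1 ∧ i % 2 = 0 then xs (i / 2)
     else if i = j + 1 ∧ j % 2 = 0 then - xs (j / 2) else 0)
  else 0

/-- Embedding of an `n × n` matrix in the upper-left corner of an infinite matrix,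
extended by the identity. -/
def embedG (n : ℕ) (g : Matrix (Fin n) (Fin n) F) : ℕ → ℕ → F := fun i j =>
  if h : i < n ∧ j < n then g ⟨i, h.1⟩ ⟨j, h.2⟩ else idM F i j

/-- Embedding of an `n × n` matrix in the upper-left corner of an infinite matrix,
extended by zero. -/
def embedZ (n : ℕ) (A : Matrix (Fin n) (Fin n) F) : ℕ → ℕ → F := fun i j =>
  if h : i < n ∧ j < n then A ⟨i, h.1⟩ ⟨j, h.2⟩ else 0

lemma embedZ_isSkew (n : ℕ) (A : Matrix (Fin n) (Fin n) F) (hA : Aᵀ = -A) :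
    embedZ F n A ∈ SkewSet F := by
  intro i j
  unfold embedZ
  by_cases h : i < n ∧ j < n
  · have h' : j < n ∧ i < n := ⟨h.2, h.1⟩
    rw [dif_pos h, dif_pos h']
    have := congrFun (congrFun hA ⟨i, h.1⟩) ⟨j, h.2⟩
    simpa [Matrix.transpose_apply] using this
  · have h' : ¬ (j < n ∧ i < n) := fun hc => h ⟨hc.2, hc.1⟩
    rw [dif_neg h, dif_neg h', neg_zero]

/-- The orbital measure `m_n(A)`: the image of the normalized Haar measure `η` of
`GL(2n, O_F)` under `g ↦ g A gᵗ ∈ Skew(ℕ, F)` (with `A` in the upper-left corner). -/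
def orbital (n : ℕ) (η : Measure (Matrix (Fin (2 * n)) (Fin (2 * n)) F))
    (A : Matrix (Fin (2 * n)) (Fin (2 * n)) F) (hA : Aᵀ = -A) : Measure (SkewM F) :=
  η.map fun g => skewAct F (embedG F (2 * n) g) ⟨embedZ F (2 * n) A, embedZ_isSkew F _ A hA⟩

/-- The set of ergodic `GL(∞, O_F)`-invariant Borel probability measures on
`Skew(ℕ, F)`, inside the space of Borel probability measures with its weak topology. -/
def PergSkew : Set (ProbabilityMeasure (SkewM F)) :=
  {μ | IsInvSkew F (μ : Measure (SkewM F)) ∧ IsErgSkew F (μ : Measure (SkewM F))}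


/-- The set of `GL(∞,O_F) × GL(∞,O_F)`-invariant Borel probability measures on `Mat(ℕ, F)`,
with the weak topology. -/
def PinvMat : Set (ProbabilityMeasure (ℕ → ℕ → F)) :=
  {σ | IsInvMat F (σ : Measure (ℕ → ℕ → F))}

/-- The set of `GL(∞,O_F)`-invariant Borel probability measures on `Skew(ℕ, F)`,
with the weak topology. -/
def PinvSkew : Set (ProbabilityMeasure (SkewM F)) :=
  {μ | IsInvSkew F (μ : Measure (SkewM F))}

/-- The map `A ↦ (A(2i-1, 2i))_{i≥1}` (in 0-indexed form, `A ↦ (A(2i, 2i+1))_{i≥0}`). -/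
def cornerSeq (A : SkewM F) : ℕ → F := fun i => A.1 (2 * i) (2 * i + 1)

/-- The group `S(∞)` of finitely supported permutations of `ℕ`. -/
def SPermInf : Set (Equiv.Perm ℕ) := {π | ∃ N, ∀ n, N ≤ n → π n = n}

/-- A Borel measure on `F^ℕ` is invariant under `S(∞)` acting by permutations of
coordinates. -/
def IsInvSPerm (ν : Measure (ℕ → F)) : Prop :=
  ∀ π ∈ SPermInf, ν.map (fun x => x ∘ π) = ν

/-- The summand `(k + ℓ - ℓ₀) 𝟙_{k + ℓ ≥ ℓ₀}` (as an element of `[0, ∞]`; it vanishes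
when `k = -∞`). -/
def deltaTerm (ℓ₀ : ℕ) (ℓ : ℤ) (k : WithBot ℤ) : ℝ≥0∞ :=
  if (0 : WithBot ℤ) ≤ k + (((ℓ - (ℓ₀ : ℤ)) : ℤ) : WithBot ℤ) then
    ((WithBot.unbotD 0 (k + (((ℓ - (ℓ₀ : ℤ)) : ℤ) : WithBot ℤ))).toNat : ℝ≥0∞)
  else 0

/-- The infinite matrix `diag(x, y, 0, 0, …)`. -/
def diag2 (x y : F) : ℕ → ℕ → F := fun i j =>
  if i = 0 ∧ j = 0 then x else if i = 1 ∧ j = 1 then y else 0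

/-- The infinite matrix whose top-left `2 × 2` block is `x · J = [[0, x], [-x, 0]]` and
whose other entries vanish. -/
def JInf (x : F) : ℕ → ℕ → F := fun i j =>
  if i = 0 ∧ j = 1 then x else if i = 1 ∧ j = 0 then -x else 0

/-- The infinite matrix with `(1,1)`-entry `x` and all other entries `0`. -/
def e11 (x : F) : ℕ → ℕ → F := fun i j => if i = 0 ∧ j = 0 then x else 0

/-! ### Auxiliary lemmas -/

lemma norm_char_le_one (χ : AddChar F ℂ) (hχ : Continuous χ) (x : F) : ‖χ x‖ ≤ 1 := by
  have : ProperSpace F := ProperSpace.of_locallyCompactSpace F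
  by_contra h
  push_neg at h
  obtain ⟨M, hM⟩ := (isCompact_closedBall (0 : F) ‖x‖).exists_bound_of_continuousOn
    hχ.continuousOn
  obtain ⟨n, hn⟩ := pow_unbounded_of_one_lt M h
  have hx : (n • x) ∈ closedBall (0 : F) ‖x‖ := by
    simp only [mem_closedBall, dist_zero_right, nsmul_eq_mul]
    calc ‖(n : F) * x‖ = ‖(n : F)‖ * ‖x‖ := norm_mul _ _
      _ ≤ 1 * ‖x‖ := by
          gcongr
          exact IsUltrametricDist.norm_natCast_le_one F n
      _ = ‖x‖ := one_mul _
  have hb := hM (n • x) hx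
  rw [AddChar.map_nsmul_eq_pow, norm_pow] at hb
  exact absurd hb (not_le.2 hn)

lemma measurable_tsum_ultra {Ω : Type*} [MeasurableSpace Ω] (g : ℕ → Ω → F)
    (hg : ∀ n, Measurable (g n)) : Measurable fun ω => ∑' n, g n ω := by
  have : ProperSpace F := ProperSpace.of_locallyCompactSpace F
  classical
  set C : Set Ω := {ω | Filter.Tendsto (fun n => g n ω) Filter.atTop (nhds 0)} with hC
  have hCm : MeasurableSet C := by
    have hCeq : C = ⋂ j : ℕ, ⋃ N : ℕ, ⋂ n : ℕ,
        {ω | N ≤ n → ‖g n ω‖ < (1 : ℝ) / (j + 1)} := by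
      ext ω
      simp only [hC, Set.mem_setOf_eq, Set.mem_iInter, Set.mem_iUnion,
        NormedAddCommGroup.tendsto_nhds_zero, Filter.eventually_atTop]
      constructor
      · intro h j
        obtain ⟨N, hN⟩ := h ((1 : ℝ) / (j + 1)) (by positivity)
        exact ⟨N, fun n hn => hN n hn⟩
      · intro h ε hε
        obtain ⟨j, hj⟩ := exists_nat_one_div_lt hε
        obtain ⟨N, hN⟩ := h j
        exact ⟨N, fun n hn => (hN n hn).trans hj⟩
    rw [hCeq]
    refine MeasurableSet.iInter fun j => MeasurableSet.iUnion fun N =>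
      MeasurableSet.iInter fun n => ?_
    by_cases hNn : N ≤ n
    · simp only [hNn, true_implies]
      exact measurableSet_lt (hg n).norm measurable_const
    · simp only [hNn, false_implies, Set.setOf_true]
      exact MeasurableSet.univ
  have hsum : ∀ ω ∈ C, Summable (fun n => g n ω) := by
    intro ω hω
    rw [summable_iff_vanishing_norm]
    intro ε hε
    have hω' : Filter.Tendsto (fun n => g n ω) Filter.atTop (nhds 0) := hω
    rw [NormedAddCommGroup.tendsto_nhds_zero] at hω'
    obtain ⟨N, hN⟩ := (Filter.eventually_atTop).1 (hω' (ε / 2) (by positivity))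
    refine ⟨Finset.range N, fun t ht => ?_⟩
    have hle : ‖∑ n ∈ t, g n ω‖ ≤ ε / 2 := by
      refine IsUltrametricDist.norm_sum_le_of_forall_le_of_nonneg (by positivity)
        fun n hn => ?_
      have hnN : N ≤ n := by
        by_contra hcon
        exact (Finset.disjoint_left.1 ht) hn (Finset.mem_range.2 (not_le.1 hcon))
      exact (hN n hnN).le
    linarith
  have key : ∀ ω, Filter.Tendsto
      (fun N => C.indicator (fun ω' => ∑ n ∈ Finset.range N, g n ω') ω)
      Filter.atTop (nhds (∑' n, g n ω)) := by
    intro ω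
    by_cases hω : ω ∈ C
    · simp only [Set.indicator_of_mem hω]
      exact (hsum ω hω).hasSum.tendsto_sum_nat
    · simp only [Set.indicator_of_notMem hω]
      rw [tsum_eq_zero_of_not_summable (fun hs => hω hs.tendsto_atTop_zero)]
      exact tendsto_const_nhds
  exact measurable_of_tendsto_metrizable
    (fun N => Measurable.indicator (by exact Finset.measurable_sum _ fun n _ => hg n) hCm)
    (tendsto_pi_nhds.2 key)

lemma measurable_Amat_entry {m' : MeasurableSpace (SampleSpace F)} (ϖ : F)
    (k : ℕ → WithBot ℤ) (i j : ℕ)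
    (h0 : ∀ n, Measurable[m'] fun ω : SampleSpace F => ω (0, n, i))
    (h1 : ∀ n, Measurable[m'] fun ω : SampleSpace F => ω (1, n, j))
    (h2 : ∀ n, Measurable[m'] fun ω : SampleSpace F => ω (0, n, j))
    (h3 : ∀ n, Measurable[m'] fun ω : SampleSpace F => ω (1, n, i))
    (hz : Measurable[m'] fun ω : SampleSpace F => ω (2, i, j))
    (hz' : Measurable[m'] fun ω : SampleSpace F => ω (2, j, i)) :
    Measurable[m'] fun ω => Amat F ϖ k ω i j := by
  unfold Amat
  apply Measurable.add
  · apply measurable_tsum_ultra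
    intro n
    by_cases hcond : klim k < k n
    · simp only [hcond, if_true]
      exact (((h0 n).mul (h1 n)).sub ((h2 n).mul (h3 n))).const_mul _
    · simp only [hcond, if_false]
      exact measurable_const
  · apply Measurable.const_mul
    by_cases hij : i < j
    · simpa only [if_pos hij] using hz
    · by_cases hji : j < i
      · simp only [if_neg hij, if_pos hji]
        exact hz'.neg
      · simp only [if_neg hij, if_neg hji]
        exact measurable_const

lemma measurable_AmatS (ϖ : F) (𝕜 : DeltaSet) : Measurable (AmatS F ϖ 𝕜) := by
  apply Measurable.subtype_mk
  apply measurable_pi_lambda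
  intro i
  apply measurable_pi_lambda
  intro j
  exact measurable_Amat_entry F ϖ 𝕜.1 i j (fun n => measurable_pi_apply _)
    (fun n => measurable_pi_apply _) (fun n => measurable_pi_apply _)
    (fun n => measurable_pi_apply _) (measurable_pi_apply _) (measurable_pi_apply _)

lemma bdiagJInf_apply_ne (r : ℕ) (xs : ℕ → F) {a b : ℕ}
    (h : ∀ i < r, ¬(a = 2*i ∧ b = 2*i+1) ∧ ¬(a = 2*i+1 ∧ b = 2*i)) :
    bdiagJInf F r xs a b = 0 := by
  unfold bdiagJInf
  split_ifs with h1 h2 h3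
  · exfalso
    obtain ⟨hb, ha⟩ := h2
    have hi : a / 2 < r := by omega
    exact (h (a/2) hi).1 ⟨by omega, by omega⟩
  · exfalso
    obtain ⟨hb, ha⟩ := h3
    have hi : b / 2 < r := by omega
    exact (h (b/2) hi).2 ⟨by omega, by omega⟩
  · rfl
  · rfl

lemma trPair_bdiagJInf (r : ℕ) (xs : ℕ → F) (S : ℕ → ℕ → F) (hS : IsSkew F S) :
    trPair F (bdiagJInf F r xs) S
      = ∑ i ∈ Finset.range r, (-(2 : F)) * (xs i * S (2*i) (2*i+1)) := by
  classical
  unfold trPair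
  have hzero : ∀ p : ℕ × ℕ, p ∉ (Finset.range r).biUnion
      (fun i => ({(2*i, 2*i+1), (2*i+1, 2*i)} : Finset (ℕ × ℕ))) →
      bdiagJInf F r xs p.1 p.2 * S p.2 p.1 = 0 := by
    intro p hp
    have hz : bdiagJInf F r xs p.1 p.2 = 0 := by
      apply bdiagJInf_apply_ne
      intro i hi
      constructor
      · rintro ⟨ha, hb⟩
        refine hp (Finset.mem_biUnion.2 ⟨i, Finset.mem_range.2 hi, ?_⟩)
        simp only [Finset.mem_insert, Finset.mem_singleton, Prod.ext_iff]
        exact Or.inl ⟨ha, hb⟩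
      · rintro ⟨ha, hb⟩
        refine hp (Finset.mem_biUnion.2 ⟨i, Finset.mem_range.2 hi, ?_⟩)
        simp only [Finset.mem_insert, Finset.mem_singleton, Prod.ext_iff]
        exact Or.inr ⟨ha, hb⟩
    rw [hz, zero_mul]
  rw [tsum_eq_sum hzero, Finset.sum_biUnion]
  · apply Finset.sum_congr rfl
    intro i hi
    rw [Finset.mem_range] at hi
    rw [Finset.sum_pair (by simp only [ne_eq, Prod.mk.injEq]; omega)]
    have hdiv : 2 * i / 2 = i := by omega
    have e1 : bdiagJInf F r xs (2*i) (2*i+1) = xs i := by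
      unfold bdiagJInf
      rw [if_pos ⟨by omega, by omega⟩, if_pos ⟨rfl, by omega⟩, hdiv]
    have e2 : bdiagJInf F r xs (2*i+1) (2*i) = - xs i := by
      unfold bdiagJInf
      rw [if_pos ⟨by omega, by omega⟩, if_neg (by omega), if_pos ⟨rfl, by omega⟩, hdiv]
    rw [e1, e2, hS (2*i) (2*i+1)]
    ring
  · intro a ha b hb hab
    refine Finset.disjoint_left.2 fun p hpa hpb => hab ?_
    simp only [Finset.mem_insert, Finset.mem_singleton] at hpa hpb
    rcases hpa with h | h <;> rcases hpb with h' | h' <;>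
      · have heq := h.symm.trans h'
        simp only [Prod.mk.injEq] at heq
        omega

lemma measurable_charIntegrand (χ : AddChar F ℂ) (hχ : Continuous χ) (r : ℕ) (xs : ℕ → F) :
    Measurable fun S : SkewM F => χ (trPair F (bdiagJInf F r xs) S.1) := by
  have heq : (fun S : SkewM F => χ (trPair F (bdiagJInf F r xs) S.1))
      = fun S : SkewM F =>
        χ (∑ i ∈ Finset.range r, (-(2 : F)) * (xs i * S.1 (2*i) (2*i+1))) := by
    funext S
    rw [trPair_bdiagJInf F r xs S.1 S.2]
  rw [heq]
  apply hχ.measurable.comp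
  apply Finset.measurable_sum
  intro i _
  apply Measurable.const_mul
  apply Measurable.const_mul
  exact (measurable_pi_apply (2*i+1)).comp
    ((measurable_pi_apply (2*i)).comp measurable_subtype_coe)

lemma charFunSkew_muK_eq (ϖ : F) (χ : AddChar F ℂ) (hχ : Continuous χ)
    (P : Measure (SampleSpace F)) (𝕜 : DeltaSet) (r : ℕ) (xs : ℕ → F) :
    charFunSkew F χ (muK F ϖ P 𝕜) (bdiagJInf F r xs)
      = ∫ ω, χ (∑ i ∈ Finset.range r,
          (-(2 : F)) * (xs i * Amat F ϖ 𝕜.1 ω (2*i) (2*i+1))) ∂P := by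
  unfold charFunSkew muK
  rw [integral_map (measurable_AmatS F ϖ 𝕜).aemeasurable
    (measurable_charIntegrand F χ hχ r xs).aestronglyMeasurable]
  refine integral_congr_ae (Filter.Eventually.of_forall fun ω => ?_)
  show χ (trPair F (bdiagJInf F r xs) (AmatS F ϖ 𝕜 ω).1) = _
  rw [trPair_bdiagJInf F r xs _ (AmatS F ϖ 𝕜 ω).2]
  rfl

lemma IsUnifO_unique {ν₁ ν₂ : Measure F} (h₁ : IsUnifO F ν₁) (h₂ : IsUnifO F ν₂) :
    ν₁ = ν₂ := by
  obtain ⟨hp₁, hc₁, hi₁⟩ := h₁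
  obtain ⟨hp₂, hc₂, hi₂⟩ := h₂
  haveI := hp₁
  haveI := hp₂
  have hadd : Measurable fun p : F × F => p.1 + p.2 := continuous_add.measurable
  have key : ∀ (μ ρ : Measure F), IsProbabilityMeasure μ → IsProbabilityMeasure ρ →
      ρ {x : F | ¬‖x‖ ≤ 1} = 0 → (∀ a : F, ‖a‖ ≤ 1 → μ.map (fun x => a + x) = μ) →
      ∀ E : Set F, MeasurableSet E →
      ∫⁻ y, ∫⁻ x, E.indicator (1 : F → ℝ≥0∞) (x + y) ∂μ ∂ρ = μ E := by
    intro μ ρ hμp hρp hρc hμi E hE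
    haveI := hμp
    haveI := hρp
    have hae : ∀ᵐ y ∂ρ, ‖y‖ ≤ 1 := by
      rw [ae_iff]
      exact hρc
    calc ∫⁻ y, ∫⁻ x, E.indicator (1 : F → ℝ≥0∞) (x + y) ∂μ ∂ρ
        = ∫⁻ _, μ E ∂ρ := by
          refine lintegral_congr_ae (hae.mono fun y hy => ?_)
          show ∫⁻ x, E.indicator (1 : F → ℝ≥0∞) (x + y) ∂μ = μ E
          have h1 : ∫⁻ x, E.indicator (1 : F → ℝ≥0∞) (x + y) ∂μ
              = ∫⁻ x, ((fun x => y + x) ⁻¹' E).indicator (1 : F → ℝ≥0∞) x ∂μ := by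
            refine lintegral_congr fun x => ?_
            by_cases hxy : x + y ∈ E
            · rw [Set.indicator_of_mem hxy, Set.indicator_of_mem
                (show x ∈ (fun x => y + x) ⁻¹' E by rw [Set.mem_preimage, add_comm]; exact hxy)]
              rfl
            · rw [Set.indicator_of_notMem hxy, Set.indicator_of_notMem
                (show x ∉ (fun x => y + x) ⁻¹' E by rw [Set.mem_preimage, add_comm]; exact hxy)]
          rw [h1, lintegral_indicator_one (hE.preimage (measurable_const_add y))]
          conv_rhs => rw [← hμi y hy]
          rw [Measure.map_apply (measurable_const_add y) hE]
      _ = μ E := by simp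
  ext E hE
  have hfm : Measurable fun p : F × F => E.indicator (1 : F → ℝ≥0∞) (p.1 + p.2) :=
    (measurable_one.indicator hE).comp hadd
  have hswap := lintegral_lintegral_swap (μ := ν₁) (ν := ν₂)
    (f := fun x y => E.indicator (1 : F → ℝ≥0∞) (x + y)) hfm.aemeasurable
  rw [key ν₁ ν₂ hp₁ hp₂ hc₂ hi₁ E hE] at hswap
  rw [← hswap]
  have h2 : ∫⁻ x, ∫⁻ y, E.indicator (1 : F → ℝ≥0∞) (x + y) ∂ν₂ ∂ν₁
      = ∫⁻ x, ∫⁻ y, E.indicator (1 : F → ℝ≥0∞) (y + x) ∂ν₂ ∂ν₁ := by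
    refine lintegral_congr fun x => lintegral_congr fun y => by rw [add_comm]
  rw [h2, key ν₂ ν₁ hp₂ hp₁ hc₁ hi₂ E hE]

lemma measurableSet_box {ι : Type*} (s : Finset ι) (E : ι → Set F)
    (hE : ∀ i, MeasurableSet (E i)) :
    MeasurableSet {ω : ι → F | ∀ i ∈ s, ω i ∈ E i} := by
  have : {ω : ι → F | ∀ i ∈ s, ω i ∈ E i}
      = ⋂ i ∈ s, (fun ω : ι → F => ω i) ⁻¹' (E i) := by
    ext ω
    simp [Set.mem_iInter]
  rw [this]
  exact MeasurableSet.biInter (s.countable_toSet)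
    (fun i _ => (measurable_pi_apply i) (hE i))

lemma measure_eq_of_boxes {ι : Type*} {P Q : Measure (ι → F)}
    (hPp : IsProbabilityMeasure P) (hQp : IsProbabilityMeasure Q)
    (h : ∀ (s : Finset ι) (E : ι → Set F), (∀ i, MeasurableSet (E i)) →
      P {ω | ∀ i ∈ s, ω i ∈ E i} = Q {ω | ∀ i ∈ s, ω i ∈ E i}) : P = Q := by
  classical
  haveI := hPp
  haveI := hQp
  set C : Set (Set (ι → F)) := {S | ∃ (s : Finset ι) (E : ι → Set F),
    (∀ i, MeasurableSet (E i)) ∧ S = {ω | ∀ i ∈ s, ω i ∈ E i}} with hC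
  have hgen : (MeasurableSpace.pi : MeasurableSpace (ι → F))
      = MeasurableSpace.generateFrom C := by
    apply le_antisymm
    · refine iSup_le fun i => ?_
      rw [← measurable_iff_comap_le]
      intro E hE
      refine MeasurableSpace.measurableSet_generateFrom ?_
      refine ⟨{i}, fun _ => E, fun _ => hE, ?_⟩
      ext ω
      simp
    · refine MeasurableSpace.generateFrom_le fun S hS => ?_
      obtain ⟨s, E, hE, rfl⟩ := hS
      exact measurableSet_box F s E hE
  have hpi : IsPiSystem C := by
    rintro S₁ ⟨s₁, E₁, hE₁, rfl⟩ S₂ ⟨s₂, E₂, hE₂, rfl⟩ _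
    refine ⟨s₁ ∪ s₂, fun i => (if i ∈ s₁ then E₁ i else Set.univ)
      ∩ (if i ∈ s₂ then E₂ i else Set.univ), fun i => ?_, ?_⟩
    · refine MeasurableSet.inter ?_ ?_ <;> split_ifs <;>
        first | exact hE₁ i | exact hE₂ i | exact MeasurableSet.univ
    · ext ω
      simp only [Set.mem_inter_iff, Set.mem_setOf_eq]
      constructor
      · rintro ⟨h1, h2⟩ i hi
        constructor
        · by_cases hm : i ∈ s₁
          · simpa [hm] using h1 i hm
          · simp [hm]
        · by_cases hm : i ∈ s₂
          · simpa [hm] using h2 i hm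
          · simp [hm]
      · intro hh
        constructor
        · intro i hi
          have := (hh i (Finset.mem_union_left _ hi)).1
          simpa [hi] using this
        · intro i hi
          have := (hh i (Finset.mem_union_right _ hi)).2
          simpa [hi] using this
  refine ext_of_generate_finite C hgen hpi (fun S hS => ?_) (by simp)
  obtain ⟨s, E, hE, rfl⟩ := hS
  exact h s E hE

lemma map_reindex_eq (P : Measure (SampleSpace F)) (hP : IsIIDUnifO F P)
    (σ : (Fin 3 × ℕ × ℕ) ≃ (Fin 3 × ℕ × ℕ)) :
    P.map (fun ω idx => ω (σ idx)) = P := by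
  classical
  obtain ⟨hPp, hPi, hPu⟩ := hP
  haveI := hPp
  have hT : Measurable fun (ω : SampleSpace F) (idx : Fin 3 × ℕ × ℕ) => ω (σ idx) :=
    measurable_pi_lambda _ fun idx => measurable_pi_apply _
  have hmarg : ∀ idx idx' : Fin 3 × ℕ × ℕ,
      P.map (fun ω => ω idx) = P.map (fun ω => ω idx') := fun idx idx' =>
    IsUnifO_unique F (hPu idx) (hPu idx')
  refine measure_eq_of_boxes F (Measure.isProbabilityMeasure_map hT.aemeasurable) hPp ?_
  intro s E hE
  rw [Measure.map_apply hT (measurableSet_box F s E hE)]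
  have hpre : (fun (ω : SampleSpace F) idx => ω (σ idx)) ⁻¹' {ω | ∀ i ∈ s, ω i ∈ E i}
      = ⋂ j ∈ s.image σ, (fun ω : SampleSpace F => ω j) ⁻¹' (E (σ.symm j)) := by
    ext ω
    simp only [Set.mem_preimage, Set.mem_setOf_eq, Set.mem_iInter, Finset.mem_image]
    constructor
    · rintro hh j ⟨i, hi, rfl⟩
      simpa using hh i hi
    · intro hh i hi
      have := hh (σ i) ⟨i, hi, rfl⟩
      simpa using this
  have hbox2 : {ω : SampleSpace F | ∀ i ∈ s, ω i ∈ E i}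
      = ⋂ i ∈ s, (fun ω : SampleSpace F => ω i) ⁻¹' (E i) := by
    ext ω
    simp [Set.mem_iInter]
  rw [hpre, hbox2]
  rw [hPi.measure_inter_preimage_eq_mul (s.image σ)
    (sets := fun j => E (σ.symm j)) (fun j _ => hE _),
    hPi.measure_inter_preimage_eq_mul s (sets := E) (fun i _ => hE i)]
  rw [Finset.prod_image (fun a _ b _ hab => σ.injective hab)]
  refine Finset.prod_congr rfl fun i _ => ?_
  rw [Equiv.symm_apply_apply]
  have e1 : P ((fun ω : SampleSpace F => ω (σ i)) ⁻¹' E i)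
      = (P.map (fun ω : SampleSpace F => ω (σ i))) (E i) :=
    (Measure.map_apply (measurable_pi_apply _) (hE i)).symm
  have e2 : P ((fun ω : SampleSpace F => ω i) ⁻¹' E i)
      = (P.map (fun ω : SampleSpace F => ω i)) (E i) :=
    (Measure.map_apply (measurable_pi_apply _) (hE i)).symm
  rw [e1, e2, hmarg (σ i) i]

lemma addChar_map_sum {ι : Type*} (χ : AddChar F ℂ) (s : Finset ι) (g : ι → F) :
    χ (∑ i ∈ s, g i) = ∏ i ∈ s, χ (g i) := by
  classical
  induction s using Finset.induction_on with
  | empty => simp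
  | insert a s h ih => rw [Finset.sum_insert h, Finset.prod_insert h, AddChar.map_add_eq_mul, ih]

lemma indepFun_integral_mul_complex {Ω : Type*} [MeasurableSpace Ω] {μ : Measure Ω}
    [IsProbabilityMeasure μ] {f g : Ω → ℂ}
    (h : ProbabilityTheory.IndepFun f g μ) (hf : Measurable f) (hg : Measurable g)
    (hbf : ∀ ω, ‖f ω‖ ≤ 1) (hbg : ∀ ω, ‖g ω‖ ≤ 1) :
    ∫ ω, f ω * g ω ∂μ = (∫ ω, f ω ∂μ) * ∫ ω, g ω ∂μ := by
  have intOf : ∀ u : Ω → ℝ, Measurable u → (∀ ω, |u ω| ≤ 1) → Integrable u μ := by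
    intro u hu hb
    exact ⟨hu.aestronglyMeasurable,
      HasFiniteIntegral.of_bounded (C := 1) (Filter.Eventually.of_forall fun ω => by
        simpa using hb ω)⟩
  have hbfr : ∀ ω, |(f ω).re| ≤ 1 := fun ω =>
    le_trans (Complex.abs_re_le_norm _) (hbf ω)
  have hbfi : ∀ ω, |(f ω).im| ≤ 1 := fun ω =>
    le_trans (Complex.abs_im_le_norm _) (hbf ω)
  have hbgr : ∀ ω, |(g ω).re| ≤ 1 := fun ω =>
    le_trans (Complex.abs_re_le_norm _) (hbg ω)
  have hbgi : ∀ ω, |(g ω).im| ≤ 1 := fun ω =>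
    le_trans (Complex.abs_im_le_norm _) (hbg ω)
  have hmfr : Measurable fun ω => (f ω).re := Complex.measurable_re.comp hf
  have hmfi : Measurable fun ω => (f ω).im := Complex.measurable_im.comp hf
  have hmgr : Measurable fun ω => (g ω).re := Complex.measurable_re.comp hg
  have hmgi : Measurable fun ω => (g ω).im := Complex.measurable_im.comp hg
  have i_fr : Integrable (fun ω => (f ω).re) μ := intOf _ hmfr hbfr
  have i_fi : Integrable (fun ω => (f ω).im) μ := intOf _ hmfi hbfi
  have i_gr : Integrable (fun ω => (g ω).re) μ := intOf _ hmgr hbgr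
  have i_gi : Integrable (fun ω => (g ω).im) μ := intOf _ hmgi hbgi
  have bmul : ∀ (u v : Ω → ℝ), (∀ ω, |u ω| ≤ 1) → (∀ ω, |v ω| ≤ 1) →
      ∀ ω, |u ω * v ω| ≤ 1 := fun u v hu hv ω => by
    rw [abs_mul]
    exact mul_le_one₀ (hu ω) (abs_nonneg _) (hv ω)
  have i_rr : Integrable (fun ω => (f ω).re * (g ω).re) μ :=
    intOf _ (hmfr.mul hmgr) (bmul _ _ hbfr hbgr)
  have i_ii : Integrable (fun ω => (f ω).im * (g ω).im) μ :=
    intOf _ (hmfi.mul hmgi) (bmul _ _ hbfi hbgi)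
  have i_rg : Integrable (fun ω => (f ω).re * (g ω).im) μ :=
    intOf _ (hmfr.mul hmgi) (bmul _ _ hbfr hbgi)
  have i_ir : Integrable (fun ω => (f ω).im * (g ω).re) μ :=
    intOf _ (hmfi.mul hmgr) (bmul _ _ hbfi hbgr)
  have e_rr : ∫ ω, (f ω).re * (g ω).re ∂μ
      = (∫ ω, (f ω).re ∂μ) * ∫ ω, (g ω).re ∂μ :=
    (h.comp Complex.measurable_re Complex.measurable_re).integral_fun_mul_eq_mul_integral i_fr.aestronglyMeasurable i_gr.aestronglyMeasurable
  have e_ii : ∫ ω, (f ω).im * (g ω).im ∂μ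
      = (∫ ω, (f ω).im ∂μ) * ∫ ω, (g ω).im ∂μ :=
    (h.comp Complex.measurable_im Complex.measurable_im).integral_fun_mul_eq_mul_integral i_fi.aestronglyMeasurable i_gi.aestronglyMeasurable
  have e_rg : ∫ ω, (f ω).re * (g ω).im ∂μ
      = (∫ ω, (f ω).re ∂μ) * ∫ ω, (g ω).im ∂μ :=
    (h.comp Complex.measurable_re Complex.measurable_im).integral_fun_mul_eq_mul_integral i_fr.aestronglyMeasurable i_gi.aestronglyMeasurable
  have e_ir : ∫ ω, (f ω).im * (g ω).re ∂μ
      = (∫ ω, (f ω).im ∂μ) * ∫ ω, (g ω).re ∂μ :=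
    (h.comp Complex.measurable_im Complex.measurable_re).integral_fun_mul_eq_mul_integral i_fi.aestronglyMeasurable i_gr.aestronglyMeasurable
  have i_f : Integrable f μ := ⟨hf.aestronglyMeasurable,
    HasFiniteIntegral.of_bounded (C := 1) (Filter.Eventually.of_forall hbf)⟩
  have i_g : Integrable g μ := ⟨hg.aestronglyMeasurable,
    HasFiniteIntegral.of_bounded (C := 1) (Filter.Eventually.of_forall hbg)⟩
  have i_fg : Integrable (fun ω => f ω * g ω) μ := ⟨(hf.mul hg).aestronglyMeasurable,
    HasFiniteIntegral.of_bounded (C := 1) (Filter.Eventually.of_forall fun ω => by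
      rw [norm_mul]
      exact mul_le_one₀ (hbf ω) (norm_nonneg _) (hbg ω))⟩
  have hre : ∀ (h : Ω → ℂ), Integrable h μ → (∫ ω, h ω ∂μ).re = ∫ ω, (h ω).re ∂μ := by
    intro h ih
    have := integral_re ih
    simpa using this.symm
  have him : ∀ (h : Ω → ℂ), Integrable h μ → (∫ ω, h ω ∂μ).im = ∫ ω, (h ω).im ∂μ := by
    intro h ih
    have := integral_im ih
    simpa using this.symm
  apply Complex.ext
  · rw [Complex.mul_re, hre _ i_fg, hre _ i_f, him _ i_f, hre _ i_g, him _ i_g,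
      ← e_rr, ← e_ii, ← integral_sub i_rr i_ii]
    refine integral_congr_ae (Filter.Eventually.of_forall fun ω => ?_)
    exact Complex.mul_re _ _
  · rw [Complex.mul_im, him _ i_fg, hre _ i_f, him _ i_f, hre _ i_g, him _ i_g,
      ← e_rg, ← e_ir, ← integral_add i_rg i_ir]
    refine integral_congr_ae (Filter.Eventually.of_forall fun ω => ?_)
    exact Complex.mul_im _ _

lemma integral_prod_of_indep (P : Measure (SampleSpace F))
    (hPp : IsProbabilityMeasure P)
    (hPi : ProbabilityTheory.iIndepFun
      (fun idx => fun ω : SampleSpace F => ω idx) P)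
    (B : ℕ → Set (Fin 3 × ℕ × ℕ)) (hBdisj : ∀ i j, i ≠ j → Disjoint (B i) (B j))
    (f : ℕ → SampleSpace F → ℂ)
    (hfm : ∀ i, Measurable[⨆ idx ∈ B i,
      MeasurableSpace.comap (fun ω : SampleSpace F => ω idx) inferInstance] (f i))
    (hfb : ∀ i ω, ‖f i ω‖ ≤ 1) (r : ℕ) :
    ∫ ω, ∏ i ∈ Finset.range r, f i ω ∂P = ∏ i ∈ Finset.range r, ∫ ω, f i ω ∂P := by
  haveI := hPp
  set m : (Fin 3 × ℕ × ℕ) → MeasurableSpace (SampleSpace F) :=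
    fun idx => MeasurableSpace.comap (fun ω : SampleSpace F => ω idx) inferInstance with hm
  have hle : ∀ idx, m idx ≤ MeasurableSpace.pi :=
    fun idx => (measurable_pi_apply idx).comap_le
  have hIndep : ProbabilityTheory.iIndep m P :=
    (ProbabilityTheory.iIndepFun_iff_iIndep _ _ _).1 hPi
  have hfull : ∀ i, Measurable (f i) := by
    intro i
    exact (hfm i).mono (iSup₂_le fun idx _ => hle idx) le_rfl
  induction r with
  | zero => simp
  | succ r ih =>
    show ∫ ω, ∏ i ∈ Finset.range (r+1), f i ω ∂P
        = ∏ i ∈ Finset.range (r+1), ∫ ω, f i ω ∂P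
    have hind := ProbabilityTheory.indep_biSup_compl hle hIndep (B r)
    have hgm : Measurable[⨆ idx ∈ (B r)ᶜ, m idx]
        fun ω => ∏ i ∈ Finset.range r, f i ω := by
      apply Finset.measurable_prod
      intro i hi
      refine (hfm i).mono ?_ le_rfl
      refine iSup₂_le fun idx hidx => ?_
      have hidx' : idx ∈ (B r)ᶜ := by
        intro hmem
        exact Set.disjoint_left.1
          (hBdisj i r (by intro hri; rw [Finset.mem_range] at hi; omega)) hidx hmem
      exact le_trans (le_refl (m idx)) (le_biSup _ hidx')
    have hIndepFun : ProbabilityTheory.IndepFun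
        (fun ω => ∏ i ∈ Finset.range r, f i ω) (f r) P := by
      rw [ProbabilityTheory.IndepFun_iff_Indep]
      exact ProbabilityTheory.indep_of_indep_of_le_right
        (ProbabilityTheory.indep_of_indep_of_le_left hind.symm
          ((Measurable.comap_le hgm)))
        (Measurable.comap_le (hfm r))
    have hgm_full : Measurable fun ω => ∏ i ∈ Finset.range r, f i ω :=
      Finset.measurable_prod _ fun i _ => hfull i
    have hgb : ∀ ω, ‖∏ i ∈ Finset.range r, f i ω‖ ≤ 1 := by
      intro ω
      rw [norm_prod]
      exact Finset.prod_le_one (fun i _ => norm_nonneg _) (fun i _ => hfb i ω)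
    conv_rhs => rw [Finset.prod_range_succ]
    have : ∫ ω, (∏ i ∈ Finset.range r, f i ω) * f r ω ∂P
        = (∫ ω, ∏ i ∈ Finset.range r, f i ω ∂P) * ∫ ω, f r ω ∂P :=
      indepFun_integral_mul_complex hIndepFun hgm_full (hfull r) hgb (hfb r)
    rw [show (∫ ω, ∏ i ∈ Finset.range (r+1), f i ω ∂P)
        = ∫ ω, (∏ i ∈ Finset.range r, f i ω) * f r ω ∂P from
        integral_congr_ae (Filter.Eventually.of_forall fun ω =>
          Finset.prod_range_succ _ _), this, ih]

/-- The permutation of `ℕ` swapping `0 ↔ 2i` and `1 ↔ 2i+1`. -/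
def blockSwap (i : ℕ) : Equiv.Perm ℕ := (Equiv.swap 0 (2*i)).trans (Equiv.swap 1 (2*i+1))

lemma blockSwap_zero (i : ℕ) : blockSwap i 0 = 2*i := by
  unfold blockSwap
  rw [Equiv.trans_apply, Equiv.swap_apply_left]
  exact Equiv.swap_apply_of_ne_of_ne (by omega) (by omega)

lemma blockSwap_one (i : ℕ) : blockSwap i 1 = 2*i+1 := by
  unfold blockSwap
  rw [Equiv.trans_apply]
  have h1 : (Equiv.swap 0 (2*i)) 1 = 1 :=
    Equiv.swap_apply_of_ne_of_ne (by omega) (by omega)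
  rw [h1, Equiv.swap_apply_left]

/-- The induced permutation of the index set of the sample space. -/
def reindexEquiv (s : Equiv.Perm ℕ) : (Fin 3 × ℕ × ℕ) ≃ (Fin 3 × ℕ × ℕ) where
  toFun p := if p.1 = 2 then (p.1, s p.2.1, s p.2.2) else (p.1, p.2.1, s p.2.2)
  invFun p := if p.1 = 2 then (p.1, s.symm p.2.1, s.symm p.2.2)
    else (p.1, p.2.1, s.symm p.2.2)
  left_inv p := by
    rcases p with ⟨a, b, c⟩
    by_cases h : a = 2 <;> simp [h]
  right_inv p := by
    rcases p with ⟨a, b, c⟩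
    by_cases h : a = 2 <;> simp [h]

lemma reindexEquiv_apply_ne (s : Equiv.Perm ℕ) (a : Fin 3) (ha : ¬ a = 2) (n m : ℕ) :
    reindexEquiv s (a, n, m) = (a, n, s m) := by
  simp [reindexEquiv, ha]

lemma reindexEquiv_apply_two (s : Equiv.Perm ℕ) (a b : ℕ) :
    reindexEquiv s (2, a, b) = (2, s a, s b) := by
  simp [reindexEquiv]

lemma Amat_reindex (ϖ : F) (k : ℕ → WithBot ℤ) (i : ℕ) (ω : SampleSpace F) :
    Amat F ϖ k (fun idx => ω (reindexEquiv (blockSwap i) idx)) 0 1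
      = Amat F ϖ k ω (2*i) (2*i+1) := by
  unfold Amat
  simp only [reindexEquiv_apply_ne (blockSwap i) 0 (by decide),
    reindexEquiv_apply_ne (blockSwap i) 1 (by decide),
    reindexEquiv_apply_two, blockSwap_zero, blockSwap_one]
  simp [show (0:ℕ) < 1 from by omega, show 2*i < 2*i+1 from by omega]

/-- The characteristic function of `μ_𝕜` is multiplicative on block-diagonal arguments: `μ̂_𝕜(diag(ϖ^{-ℓ₁}J, …, ϖ^{-ℓ_r}J, 0, …)) = ∏ᵢ μ̂_𝕜(diag(ϖ^{-ℓᵢ}J, 0, …))`. -/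
theorem charFun_muK_multiplicative (h2 : (2 : F) ≠ 0) (ϖ : F) (hϖ : IsUniformizer F ϖ)
    (χ : AddChar F ℂ) (hχ : IsGoodChar F ϖ χ)
    (P : Measure (SampleSpace F)) (hP : IsIIDUnifO F P)
    (𝕜 : DeltaSet) (r : ℕ) (ℓ : ℕ → ℤ) :
    charFunSkew F χ (muK F ϖ P 𝕜) (bdiagJInf F r fun m => ϖ ^ (-(ℓ m))) =
      ∏ i ∈ Finset.range r,
        charFunSkew F χ (muK F ϖ P 𝕜) (bdiagJInf F 1 fun _ => ϖ ^ (-(ℓ i))) := by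
  classical
  obtain ⟨hPp, hPInd, hPu⟩ := hP
  haveI := hPp
  obtain ⟨hχc, hχ1, hχx⟩ := hχ
  set c : ℕ → F := fun m => ϖ ^ (-(ℓ m)) with hc
  set f : ℕ → SampleSpace F → ℂ :=
    fun i ω => χ ((-(2:F)) * (c i * Amat F ϖ 𝕜.1 ω (2*i) (2*i+1))) with hfdef
  -- Step 1 : the left-hand side is the integral of the product of the `f i`.
  have hLHS : charFunSkew F χ (muK F ϖ P 𝕜) (bdiagJInf F r c)
      = ∫ ω, ∏ i ∈ Finset.range r, f i ω ∂P := by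
    rw [charFunSkew_muK_eq F ϖ χ hχc P 𝕜 r c]
    refine integral_congr_ae (Filter.Eventually.of_forall fun ω => ?_)
    show χ (∑ i ∈ Finset.range r, (-(2:F)) * (c i * Amat F ϖ 𝕜.1 ω (2*i) (2*i+1)))
        = ∏ i ∈ Finset.range r, f i ω
    rw [addChar_map_sum F χ]
  -- Step 2 : independence of the blocks.
  set B : ℕ → Set (Fin 3 × ℕ × ℕ) :=
    fun i => {idx | idx.2.2 = 2*i ∨ idx.2.2 = 2*i+1} with hB
  have hBdisj : ∀ i j, i ≠ j → Disjoint (B i) (B j) := by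
    intro i j hij
    rw [Set.disjoint_left]
    intro idx h1 h2
    simp only [hB, Set.mem_setOf_eq] at h1 h2
    omega
  have hfm : ∀ i, Measurable[⨆ idx ∈ B i,
      MeasurableSpace.comap (fun ω : SampleSpace F => ω idx) inferInstance] (f i) := by
    intro i
    set G : MeasurableSpace (SampleSpace F) := ⨆ idx ∈ B i,
      MeasurableSpace.comap (fun ω : SampleSpace F => ω idx) inferInstance with hG
    have heval : ∀ idx ∈ B i, Measurable[G] (fun ω : SampleSpace F => ω idx) := by
      intro idx hidx
      rw [measurable_iff_comap_le, hG]
      exact le_biSup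
        (f := fun idx => MeasurableSpace.comap (fun ω : SampleSpace F => ω idx)
          inferInstance) hidx
    have hentry : Measurable[G] fun ω => Amat F ϖ 𝕜.1 ω (2*i) (2*i+1) := by
      refine measurable_Amat_entry F ϖ 𝕜.1 (2*i) (2*i+1)
        (fun n => heval _ (Or.inl rfl)) (fun n => heval _ (Or.inr rfl))
        (fun n => heval _ (Or.inr rfl)) (fun n => heval _ (Or.inl rfl))
        (heval _ (Or.inr rfl)) (heval _ (Or.inl rfl))
    exact hχc.measurable.comp ((hentry.const_mul (c i)).const_mul (-(2:F)))
  have hfb : ∀ i ω, ‖f i ω‖ ≤ 1 := fun i ω => norm_char_le_one F χ hχc _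
  have hsplit := integral_prod_of_indep F P hPp hPInd B hBdisj f hfm hfb r
  -- Step 3 : identification of each factor.
  have hentry_full : ∀ a b : ℕ, Measurable fun ω => Amat F ϖ 𝕜.1 ω a b := by
    intro a b
    exact measurable_Amat_entry F ϖ 𝕜.1 a b (fun n => measurable_pi_apply _)
      (fun n => measurable_pi_apply _) (fun n => measurable_pi_apply _)
      (fun n => measurable_pi_apply _) (measurable_pi_apply _) (measurable_pi_apply _)
  have hfactor : ∀ i, ∫ ω, f i ω ∂P
      = charFunSkew F χ (muK F ϖ P 𝕜) (bdiagJInf F 1 fun _ => c i) := by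
    intro i
    rw [charFunSkew_muK_eq F ϖ χ hχc P 𝕜 1 (fun _ => c i)]
    have hTmeas : Measurable fun (ω : SampleSpace F) (idx : Fin 3 × ℕ × ℕ) =>
        ω (reindexEquiv (blockSwap i) idx) :=
      measurable_pi_lambda _ fun idx => measurable_pi_apply _
    have hintm : Measurable fun ω : SampleSpace F =>
        χ ((-(2:F)) * (c i * Amat F ϖ 𝕜.1 ω 0 1)) :=
      hχc.measurable.comp (((hentry_full 0 1).const_mul (c i)).const_mul (-(2:F)))
    have hmapeq := map_reindex_eq F P ⟨hPp, hPInd, hPu⟩ (reindexEquiv (blockSwap i))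
    calc ∫ ω, f i ω ∂P
        = ∫ ω, χ ((-(2:F)) * (c i * Amat F ϖ 𝕜.1 ω 0 1))
            ∂(P.map (fun ω idx => ω (reindexEquiv (blockSwap i) idx))) := by
          rw [integral_map hTmeas.aemeasurable hintm.aestronglyMeasurable]
          refine integral_congr_ae (Filter.Eventually.of_forall fun ω => ?_)
          show f i ω = χ ((-(2:F)) * (c i
            * Amat F ϖ 𝕜.1 (fun idx => ω (reindexEquiv (blockSwap i) idx)) 0 1))
          rw [Amat_reindex F ϖ 𝕜.1 i ω]
      _ = ∫ ω, χ ((-(2:F)) * (c i * Amat F ϖ 𝕜.1 ω 0 1)) ∂P := by rw [hmapeq]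
      _ = ∫ ω, χ (∑ j ∈ Finset.range 1,
            (-(2:F)) * ((fun _ => c i) j * Amat F ϖ 𝕜.1 ω (2*j) (2*j+1))) ∂P := by
          refine integral_congr_ae (Filter.Eventually.of_forall fun ω => ?_)
          show χ ((-(2:F)) * (c i * Amat F ϖ 𝕜.1 ω 0 1))
            = χ (∑ j ∈ Finset.range 1,
                (-(2:F)) * ((fun _ => c i) j * Amat F ϖ 𝕜.1 ω (2*j) (2*j+1)))
          rw [Finset.sum_range_one]
  rw [hLHS, hsplit]
  exact Finset.prod_congr rfl fun i _ => hfactor i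

end SkewPaper
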